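/- Let $f$ be a measurable function on a measure space with distribution function $\lambda_f(s) = \mu\{|f| > s\}$ and nonincreasing rearrangement $f^*$. Then for all $t > 0$ with $\lambda_f$ finite on $(0,\infty)$: $t\,(f^{**}(t) - f^*(t)) = \int_{f^*(t)}^{\infty} \lambda_f(u)\,du$, where $f^{**}(t) = \frac{1}{t}\int_0^t f^*(s)\,ds$. -/

import Mathlib

open Set MeasureTheory
open scoped ENNReal NNReal

/-- The nonincreasing rearrangement `h^*(t) = inf{s ≥ 0 : μ{h > s} ≤ t}`. -/
noncomputable def rearr {α : Type*} [MeasurableSpace α] (μ : Measure α)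
    (h : α → ℝ) (t : ℝ) : ℝ :=
  sInf {s : ℝ | 0 ≤ s ∧ μ {x | s < h x} ≤ ENNReal.ofReal t}

section helpers
variable {α : Type*} [MeasurableSpace α] {μ : Measure α} {f : α → ℝ}

lemma lam_anti : Antitone (fun u : ℝ => μ {x | u < |f x|}) :=
  fun u v huv => measure_mono (fun x hx => lt_of_le_of_lt huv hx)

lemma lam_right_cont (u : ℝ) :
    μ {x | u < |f x|} = ⨆ n : ℕ, μ {x | u + 1/(n+1) < |f x|} := by
  have hset : {x | u < |f x|} = ⋃ n : ℕ, {x | u + 1/(n+1) < |f x|} := by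
    ext x
    simp only [mem_setOf_eq, mem_iUnion]
    constructor
    · intro hx
      obtain ⟨n, hn⟩ := exists_nat_one_div_lt (sub_pos.mpr hx)
      exact ⟨n, by push_cast at hn ⊢; linarith⟩
    · rintro ⟨n, hn⟩
      have h0 : (0:ℝ) < 1/(n+1) := by positivity
      linarith
  rw [hset]
  refine Directed.measure_iUnion ?_
  refine Monotone.directed_le ?_
  intro m n hmn x hx
  simp only [mem_setOf_eq] at hx ⊢
  have hmn' : (m:ℝ) ≤ n := Nat.cast_le.mpr hmn
  have : (1:ℝ)/(n+1) ≤ 1/(m+1) := by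
    apply one_div_le_one_div_of_le (by positivity)
    linarith
  linarith

lemma lam_le_of_forall {u : ℝ} {c : ℝ≥0∞}
    (h : ∀ ε > (0:ℝ), ∃ r, r < u + ε ∧ μ {x | r < |f x|} ≤ c) :
    μ {x | u < |f x|} ≤ c := by
  rw [lam_right_cont]
  refine iSup_le fun n => ?_
  obtain ⟨r, hr1, hr2⟩ := h (1/(n+1)) (by positivity)
  exact le_trans (lam_anti hr1.le) hr2

lemma rearr_set_nonempty (hmeas : Measurable f)
    (hfin : ∀ s : ℝ, 0 < s → μ {x | s < |f x|} < ⊤) {s : ℝ} (hs : 0 < s) :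
    ∃ r : ℝ, 0 ≤ r ∧ μ {x | r < |f x|} ≤ ENNReal.ofReal s := by
  by_contra h
  push_neg at h
  have hm : ∀ n : ℕ, MeasurableSet {x | (n+1:ℝ) < |f x|} :=
    fun n => measurableSet_lt measurable_const hmeas.abs
  have hinter : (⋂ n : ℕ, {x | (n+1:ℝ) < |f x|}) = ∅ := by
    ext x
    simp only [mem_iInter, mem_setOf_eq, mem_empty_iff_false, iff_false, not_forall, not_lt]
    obtain ⟨n, hn⟩ := exists_nat_gt (|f x|)
    exact ⟨n, by push_cast; linarith⟩
  have hd : Directed (· ⊇ ·) (fun n : ℕ => {x | (n+1:ℝ) < |f x|}) := by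
    refine Antitone.directed_ge ?_
    intro m n hmn x hx
    simp only [mem_setOf_eq] at hx ⊢
    have : (m:ℝ) ≤ n := Nat.cast_le.mpr hmn
    linarith
  have h0 := Directed.measure_iInter (fun n => (hm n).nullMeasurableSet) hd
    ⟨0, by simpa using (hfin 1 one_pos).ne⟩
  rw [hinter, measure_empty] at h0
  have hpos : (0:ℝ≥0∞) < ENNReal.ofReal s := ENNReal.ofReal_pos.mpr hs
  have : ENNReal.ofReal s ≤ ⨅ n : ℕ, μ {x | (n+1:ℝ) < |f x|} :=
    le_iInf fun n => (h (n+1) (by positivity)).le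
  rw [← h0] at this
  exact absurd this (by simpa using hpos.ne')

lemma rearr_nonneg (s : ℝ) : 0 ≤ rearr μ (fun x => |f x|) s :=
  Real.sInf_nonneg (fun r hr => hr.1)

lemma rearr_gt_iff (hmeas : Measurable f)
    (hfin : ∀ s : ℝ, 0 < s → μ {x | s < |f x|} < ⊤) {s u : ℝ} (hs : 0 < s) (hu : 0 ≤ u) :
    u < rearr μ (fun x => |f x|) s ↔ ENNReal.ofReal s < μ {x | u < |f x|} := by
  set A : Set ℝ := {r : ℝ | 0 ≤ r ∧ μ {x | r < |f x|} ≤ ENNReal.ofReal s} with hA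
  have hre : rearr μ (fun x => |f x|) s = sInf A := rfl
  have hbd : BddBelow A := ⟨0, fun r hr => hr.1⟩
  have hne : A.Nonempty := by
    obtain ⟨r, h1, h2⟩ := rearr_set_nonempty hmeas hfin hs
    exact ⟨r, h1, h2⟩
  rw [hre]
  constructor
  · intro h
    by_contra hc
    push_neg at hc
    have : sInf A ≤ u := csInf_le hbd ⟨hu, hc⟩
    linarith
  · intro h
    have key : ∀ r ∈ A, u < r := by
      intro r hr
      by_contra hru
      push_neg at hru
      exact absurd (le_trans (lam_anti hru) hr.2) (not_le.mpr h)
    have h1 : u ≤ sInf A := le_csInf hne (fun r hr => (key r hr).le)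
    rcases lt_or_eq_of_le h1 with h2 | h2
    · exact h2
    · exfalso
      have hle : μ {x | u < |f x|} ≤ ENNReal.ofReal s := by
        apply lam_le_of_forall
        intro ε hε
        have : sInf A < u + ε := by linarith [h2 ▸ (lt_add_of_pos_right u hε)]
        obtain ⟨r, hrA, hrlt⟩ := (csInf_lt_iff hbd hne).mp this
        exact ⟨r, hrlt, hrA.2⟩
      exact absurd h (not_lt.mpr hle)

end helpers
/-- `t (f^{**}(t) - f^*(t)) = ∫_{f^*(t)}^∞ λ_f(u) du`, where `λ_f` is the
distribution function and `f^{**}(t) = (1/t)∫_0^t f^*`. -/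
theorem stmt17 {α : Type*} [MeasurableSpace α] (μ : Measure α) (f : α → ℝ)
    (hmeas : Measurable f)
    (hfin : ∀ s : ℝ, 0 < s → μ {x | s < |f x|} < ⊤)
    (hint : ∀ t, 0 < t → IntegrableOn (rearr μ (fun x => |f x|)) (Ioc 0 t))
    (t : ℝ) (ht : 0 < t) :
    t * ((1/t) * (∫ s in Ioc (0:ℝ) t, rearr μ (fun x => |f x|) s)
          - rearr μ (fun x => |f x|) t)
      = ∫ u in Ioi (rearr μ (fun x => |f x|) t), (μ {x | u < |f x|}).toReal := by
  set g : ℝ → ℝ := rearr μ (fun x => |f x|) with hg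
  set a : ℝ := g t with ha
  set I : ℝ := ∫ s in Ioc (0:ℝ) t, g s with hI
  have ha0 : 0 ≤ a := rearr_nonneg t
  have hI0 : 0 ≤ I := setIntegral_nonneg measurableSet_Ioc (fun s _ => rearr_nonneg s)
  -- Step 1: real to lintegral
  have step1 : ENNReal.ofReal I = ∫⁻ s in Ioc (0:ℝ) t, ENNReal.ofReal (g s) :=
    ofReal_integral_eq_lintegral_ofReal (hint t ht)
      (ae_of_all _ (fun s => rearr_nonneg s))
  -- Step 2: layer cake
  have step2 : (∫⁻ s in Ioc (0:ℝ) t, ENNReal.ofReal (g s))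
      = ∫⁻ u in Ioi (0:ℝ), (volume.restrict (Ioc (0:ℝ) t)) {s | u < g s} :=
    lintegral_eq_lintegral_meas_lt _ (ae_of_all _ (fun s => rearr_nonneg s))
      (hint t ht).aemeasurable
  -- split off at a
  have hsplit : (∫⁻ u in Ioi (0:ℝ), (volume.restrict (Ioc (0:ℝ) t)) {s | u < g s})
      = (∫⁻ u in Ioc (0:ℝ) a, (volume.restrict (Ioc (0:ℝ) t)) {s | u < g s})
        + ∫⁻ u in Ioi a, (volume.restrict (Ioc (0:ℝ) t)) {s | u < g s} := by
    rw [← lintegral_union measurableSet_Ioi (Ioc_disjoint_Ioi le_rfl),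
      Ioc_union_Ioi_eq_Ioi ha0]
  -- first piece
  have piece1 : (∫⁻ u in Ioc (0:ℝ) a, (volume.restrict (Ioc (0:ℝ) t)) {s | u < g s})
      = ENNReal.ofReal t * ENNReal.ofReal a := by
    rw [← setLIntegral_congr Ioo_ae_eq_Ioc]
    have : ∀ u ∈ Ioo (0:ℝ) a, (volume.restrict (Ioc (0:ℝ) t)) {s | u < g s}
        = ENNReal.ofReal t := by
      intro u hu
      have hsub : Ioc (0:ℝ) t ⊆ {s | u < g s} := by
        intro s hs
        have h1 : ENNReal.ofReal t < μ {x | u < |f x|} :=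
          (rearr_gt_iff hmeas hfin ht hu.1.le).mp hu.2
        have h2 : ENNReal.ofReal s ≤ ENNReal.ofReal t := ENNReal.ofReal_le_ofReal hs.2
        exact (rearr_gt_iff hmeas hfin hs.1 hu.1.le).mpr (lt_of_le_of_lt h2 h1)
      rw [Measure.restrict_apply' measurableSet_Ioc,
        inter_eq_self_of_subset_right hsub, Real.volume_Ioc, sub_zero]
    rw [setLIntegral_congr_fun measurableSet_Ioo this, setLIntegral_const,
      Real.volume_Ioo, sub_zero]
  -- second piece
  have piece2 : (∫⁻ u in Ioi a, (volume.restrict (Ioc (0:ℝ) t)) {s | u < g s})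
      = ∫⁻ u in Ioi a, μ {x | u < |f x|} := by
    refine setLIntegral_congr_fun measurableSet_Ioi ?_
    intro u hu
    beta_reduce
    have hu0 : 0 ≤ u := le_trans ha0 (le_of_lt hu)
    have hlam_le : μ {x | u < |f x|} ≤ ENNReal.ofReal t := by
      by_contra hc
      push_neg at hc
      exact absurd ((rearr_gt_iff hmeas hfin ht hu0).mpr hc) (not_lt.mpr hu.le)
    set l : ℝ := (μ {x | u < |f x|}).toReal with hl
    have hlfin : μ {x | u < |f x|} ≠ ⊤ :=
      (lt_of_le_of_lt hlam_le (ENNReal.ofReal_lt_top)).ne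
    have hlam : μ {x | u < |f x|} = ENNReal.ofReal l := (ENNReal.ofReal_toReal hlfin).symm
    have hl0 : 0 ≤ l := ENNReal.toReal_nonneg
    have hlt : l ≤ t := by
      rw [hlam] at hlam_le
      exact (ENNReal.ofReal_le_ofReal_iff ht.le).mp hlam_le
    have hset : {s | u < g s} ∩ Ioc (0:ℝ) t = Ioo 0 l := by
      ext s
      simp only [mem_inter_iff, mem_setOf_eq, mem_Ioc, mem_Ioo]
      constructor
      · rintro ⟨hgs, hs0, hst⟩
        have := (rearr_gt_iff hmeas hfin hs0 hu0).mp hgs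
        rw [hlam] at this
        exact ⟨hs0, (ENNReal.ofReal_lt_ofReal_iff_of_nonneg hs0.le).mp this⟩
      · rintro ⟨hs0, hsl⟩
        refine ⟨?_, hs0, le_trans hsl.le hlt⟩
        refine (rearr_gt_iff hmeas hfin hs0 hu0).mpr ?_
        rw [hlam]
        exact (ENNReal.ofReal_lt_ofReal_iff_of_nonneg hs0.le).mpr hsl
    rw [Measure.restrict_apply' measurableSet_Ioc, hset, Real.volume_Ioo, sub_zero, ← hlam]
  -- combine
  have key : ENNReal.ofReal I
      = ENNReal.ofReal t * ENNReal.ofReal a + ∫⁻ u in Ioi a, μ {x | u < |f x|} := by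
    rw [step1, step2, hsplit, piece1, piece2]
  set J : ℝ≥0∞ := ∫⁻ u in Ioi a, μ {x | u < |f x|} with hJ
  have hJfin : J ≠ ⊤ := by
    intro hc
    rw [hc] at key
    simp [ENNReal.add_eq_top] at key
  -- RHS real integral
  have hRHS : (∫ u in Ioi a, (μ {x | u < |f x|}).toReal) = J.toReal := by
    rw [hJ]
    refine integral_toReal (lam_anti.measurable.aemeasurable.restrict) ?_
    refine (ae_restrict_iff' measurableSet_Ioi).mpr (ae_of_all _ ?_)
    intro u hu
    exact hfin u (lt_of_le_of_lt ha0 hu)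
  -- take toReal of key
  have hIeq : I = t * a + J.toReal := by
    have := congrArg ENNReal.toReal key
    rw [ENNReal.toReal_ofReal hI0, ENNReal.toReal_add (by finiteness) hJfin,
      ← ENNReal.ofReal_mul ht.le, ENNReal.toReal_ofReal (by positivity)] at this
    exact this
  rw [hRHS]
  rw [hIeq]
  field_simp
  ring
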